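/- arXiv:1405.2746 — 2 statements merged into one kernel-verified Lean document; each statement's English description precedes it below -/
import Mathlib

section
/- Let k be a field of characteristic zero, let n ≥ 1, let h ∈ k[x_0,…,x_n] be a homogeneous polynomial of degree d ∈ ℕ, and let f_0,…,f_n ∈ k(x_0,…,x_n) be homogeneous rational functions of degree e ∈ ℤ with e ≠ 0. Then Jac(hf_0,…,hf_n) = (1 + d/e)·Jac(f_0,…,f_n)·h^{n+1}. -/
open MvPolynomial

noncomputable section

/-- `F = k(x_0,…,x_n)`, the fraction field of `k[x_0,…,x_n]` (in `n+1` variables). -/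
abbrev Fn (k : Type) [Field k] (n : ℕ) : Type :=
  FractionRing (MvPolynomial (Fin (n + 1)) k)

/-- The family `D` of derivations on `k(x_0,…,x_n)` consists of the canonical extensions
of the partial derivatives `∂/∂x_j` on `k[x_0,…,x_n]`. -/
def ExtendsPderiv (k : Type) [Field k] (n : ℕ)
    (D : Fin (n + 1) → Derivation k (Fn k n) (Fn k n)) : Prop :=
  ∀ (j : Fin (n + 1)) (p : MvPolynomial (Fin (n + 1)) k),
    D j (algebraMap (MvPolynomial (Fin (n + 1)) k) (Fn k n) p) =
      algebraMap (MvPolynomial (Fin (n + 1)) k) (Fn k n) (pderiv j p)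

/-- `Jac(f_0,…,f_n) = det (∂f_i/∂x_j)`. -/
def Jac (k : Type) [Field k] (n : ℕ)
    (D : Fin (n + 1) → Derivation k (Fn k n) (Fn k n))
    (f : Fin (n + 1) → Fn k n) : Fn k n :=
  Matrix.det (Matrix.of fun i j => D j (f i))

/-- `f ∈ k(x_0,…,x_n)` is homogeneous of degree `e ∈ ℤ`: it can be written as a quotient
`g/h` of nonzero homogeneous polynomials with `deg g − deg h = e`. -/
def IsHomogeneousRat (k : Type) [Field k] (n : ℕ) (f : Fn k n) (e : ℤ) : Prop :=
  ∃ (g h : MvPolynomial (Fin (n + 1)) k) (dg dh : ℕ),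
    g ≠ 0 ∧ h ≠ 0 ∧ g.IsHomogeneous dg ∧ h.IsHomogeneous dh ∧
    f = algebraMap (MvPolynomial (Fin (n + 1)) k) (Fn k n) g /
        algebraMap (MvPolynomial (Fin (n + 1)) k) (Fn k n) h ∧
    (dg : ℤ) - (dh : ℤ) = e

/-! ### Auxiliary lemmas -/

lemma X_mul_pderiv_monomial {k : Type} [CommRing k] {σ : Type} (j : σ) (u : σ →₀ ℕ) (c : k) :
    X j * pderiv j (monomial u c) = (u j) • monomial u c := by
  classical
  rw [pderiv_monomial]
  rcases Nat.eq_zero_or_pos (u j) with h0 | hpos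
  · simp [h0]
  · have hle : Finsupp.single j 1 ≤ u := by
      rw [Finsupp.single_le_iff]; exact hpos
    have : X j * monomial (u - Finsupp.single j 1) (c * u j)
        = monomial (Finsupp.single j 1 + (u - Finsupp.single j 1)) (1 * (c * u j)) := by
      rw [X, monomial_mul]
    rw [this, add_tsub_cancel_of_le hle, one_mul, smul_monomial]
    congr 1
    simp [mul_comm]

/-- Euler's identity for homogeneous polynomials. -/
lemma euler_poly {k : Type} [CommRing k] {σ : Type} [Fintype σ]
    (p : MvPolynomial σ k) {d : ℕ} (hp : p.IsHomogeneous d) :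
    ∑ j, X j * pderiv j p = d • p := by
  classical
  calc ∑ j, X j * pderiv j p
      = ∑ j, ∑ u ∈ p.support, X j * pderiv j (monomial u (coeff u p)) := by
        refine Finset.sum_congr rfl fun j _ => ?_
        conv_lhs => rw [p.as_sum]
        rw [map_sum, Finset.mul_sum]
    _ = ∑ u ∈ p.support, ∑ j, X j * pderiv j (monomial u (coeff u p)) := Finset.sum_comm
    _ = ∑ u ∈ p.support, d • monomial u (coeff u p) := by
        refine Finset.sum_congr rfl fun u hu => ?_
        have hud : ∑ j, u j = d := by
          have hd := hp (mem_support_iff.mp hu)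
          rw [show (Finsupp.weight 1 : (σ →₀ ℕ) →+ ℕ) = Finsupp.degree from
            Finsupp.degree_eq_weight_one.symm, Finsupp.degree_apply] at hd
          rw [← hd]
          exact (Finset.sum_subset (Finset.subset_univ _)
            (fun j _ hj => Finsupp.notMem_support_iff.mp hj)).symm
        rw [← hud]
        simp_rw [_root_.X_mul_pderiv_monomial]
        rw [← Finset.sum_smul]
    _ = d • p := by rw [← Finset.smul_sum, ← p.as_sum]

/-- Euler's identity, transported to the fraction field. -/
lemma euler_map (k : Type) [Field k] (n : ℕ)
    (D : Fin (n + 1) → Derivation k (Fn k n) (Fn k n)) (hD : ExtendsPderiv k n D)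
    (p : MvPolynomial (Fin (n + 1)) k) {d : ℕ} (hp : p.IsHomogeneous d) :
    ∑ j, algebraMap (MvPolynomial (Fin (n + 1)) k) (Fn k n) (X j) *
        D j (algebraMap (MvPolynomial (Fin (n + 1)) k) (Fn k n) p) =
      (d : Fn k n) * algebraMap (MvPolynomial (Fin (n + 1)) k) (Fn k n) p := by
  set A := algebraMap (MvPolynomial (Fin (n + 1)) k) (Fn k n)
  calc ∑ j, A (X j) * D j (A p) = ∑ j, A (X j * pderiv j p) := by
        refine Finset.sum_congr rfl fun j _ => ?_
        rw [hD j p, map_mul]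
    _ = A (∑ j, X j * pderiv j p) := (map_sum A _ _).symm
    _ = A (d • p) := by rw [euler_poly p hp]
    _ = (d : Fn k n) * A p := by rw [nsmul_eq_mul, map_mul, map_natCast]

/-- Euler's identity for homogeneous rational functions. -/
lemma euler_rat (k : Type) [Field k] (n : ℕ)
    (D : Fin (n + 1) → Derivation k (Fn k n) (Fn k n)) (hD : ExtendsPderiv k n D)
    (f : Fn k n) (e : ℤ) (hf : IsHomogeneousRat k n f e) :
    ∑ j, algebraMap (MvPolynomial (Fin (n + 1)) k) (Fn k n) (X j) * D j f =
      (e : Fn k n) * f := by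
  obtain ⟨g, p, dg, dp, hg0, hp0, hgH, hpH, hfeq, hdeg⟩ := hf
  set A := algebraMap (MvPolynomial (Fin (n + 1)) k) (Fn k n) with hA
  have hP0 : A p ≠ 0 := fun hc => hp0 (IsFractionRing.injective _ _ (by rw [hc, map_zero]))
  have key : ∑ j, A (X j) * D j f
      = (A p)⁻¹ ^ 2 * (A p * ∑ j, A (X j) * D j (A g)
          - A g * ∑ j, A (X j) * D j (A p)) := by
    rw [Finset.mul_sum, Finset.mul_sum, ← Finset.sum_sub_distrib, Finset.mul_sum]
    refine Finset.sum_congr rfl fun j _ => ?_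
    rw [hfeq, Derivation.leibniz_div, smul_eq_mul, smul_eq_mul, smul_eq_mul]
    ring
  rw [key, euler_map k n D hD g hgH, euler_map k n D hD p hpH, hfeq]
  have hcast : (e : Fn k n) = (dg : Fn k n) - (dp : Fn k n) := by
    rw [← hdeg]; push_cast; ring
  rw [hcast]
  field_simp
  ring

set_option maxHeartbeats 1000000 in
/-- If `char k = 0`, `h` is homogeneous of degree `d` and `f_0,…,f_n` are homogeneous
rational functions of degree `e ≠ 0`, then
`Jac(hf_0,…,hf_n) = (1 + d/e)·Jac(f_0,…,f_n)·h^{n+1}`. -/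
theorem jac_smul_homogeneous (k : Type) [Field k] [CharZero k] (n : ℕ) (hn : 1 ≤ n)
    (D : Fin (n + 1) → Derivation k (Fn k n) (Fn k n)) (hD : ExtendsPderiv k n D)
    (h : MvPolynomial (Fin (n + 1)) k) (d : ℕ) (hh : h.IsHomogeneous d)
    (f : Fin (n + 1) → Fn k n) (e : ℤ) (he : e ≠ 0)
    (hf : ∀ i, IsHomogeneousRat k n (f i) e) :
    Jac k n D (fun i => algebraMap (MvPolynomial (Fin (n + 1)) k) (Fn k n) h * f i) =
      (1 + (d : Fn k n) / (e : Fn k n)) * Jac k n D f *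
        algebraMap (MvPolynomial (Fin (n + 1)) k) (Fn k n) h ^ (n + 1) := by
  classical
  set A := algebraMap (MvPolynomial (Fin (n + 1)) k) (Fn k n) with hA
  by_cases hzero : h = 0
  · subst hzero
    simp [Jac, Matrix.det_zero, show (Matrix.of fun (_ _ : Fin (n+1)) => (0 : Fn k n)) = 0
      from rfl]
  have hH0 : A h ≠ 0 := fun hc => hzero (IsFractionRing.injective _ _ (by rw [hc, map_zero]))
  have he' : (e : Fn k n) ≠ 0 := Int.cast_ne_zero.mpr he
  set M : Matrix (Fin (n + 1)) (Fin (n + 1)) (Fn k n) := Matrix.of fun i j => D j (f i) with hM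
  set u : Fin (n + 1) → Fn k n := fun l => A (X l) with hu
  set v : Fin (n + 1) → Fn k n := fun j => (e : Fn k n)⁻¹ * (A h)⁻¹ * D j (A h) with hv
  set C : Matrix (Fin (n + 1)) (Fin (n + 1)) (Fn k n) :=
    A h • (1 + Matrix.replicateCol (Fin 1) u * Matrix.replicateRow (Fin 1) v) with hC
  have hCentry : ∀ l j, C l j = A h * ((if l = j then 1 else 0) + u l * v j) := by
    intro l j
    simp only [hC, Matrix.smul_apply, Matrix.add_apply, Matrix.one_apply, Matrix.mul_apply,
      Matrix.replicateCol_apply, Matrix.replicateRow_apply, Finset.univ_unique, Finset.sum_singleton,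
      smul_eq_mul]
  have hMC : (Matrix.of fun i j => D j (A h * f i)) = M * C := by
    ext i j
    rw [Matrix.mul_apply]
    have step : ∀ l, M i l * C l j
        = A h * ((if l = j then D l (f i) else 0) + (v j) * (u l * D l (f i))) := by
      intro l
      rw [hCentry l j]
      by_cases hlj : l = j <;> simp [hlj, hM] <;> ring
    simp_rw [step]
    rw [← Finset.mul_sum, Finset.sum_add_distrib, ← Finset.mul_sum]
    have hsum1 : ∑ l, (if l = j then D l (f i) else 0) = D j (f i) := by
      simp
    have hsum2 : ∑ l, u l * D l (f i) = (e : Fn k n) * f i := euler_rat k n D hD (f i) e (hf i)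
    rw [hsum1, hsum2, Matrix.of_apply, Derivation.leibniz, smul_eq_mul, smul_eq_mul, hv]
    field_simp
  have hdetC : C.det = (1 + (d : Fn k n) / (e : Fn k n)) * (A h) ^ (n + 1) := by
    have hvu : dotProduct v u = (d : Fn k n) / (e : Fn k n) := by
      have : ∑ j, v j * u j
          = (e : Fn k n)⁻¹ * (A h)⁻¹ * ∑ j, A (X j) * D j (A h) := by
        rw [Finset.mul_sum]
        refine Finset.sum_congr rfl fun j _ => ?_
        rw [hv, hu]; ring
      rw [dotProduct, this, euler_map k n D hD h hh]
      field_simp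
      ring
    rw [hC, Matrix.det_smul]
    erw [Matrix.det_one_add_replicateCol_mul_replicateRow (ι := Fin 1) u v]
    rw [hvu, Fintype.card_fin]
    ring
  have lhs_eq : Jac k n D (fun i => A h * f i) = M.det * C.det := by
    rw [Jac, hMC, Matrix.det_mul]
  rw [lhs_eq, hdetC, Jac, ← hM]
  ring
end
end

section
/- Let n ≥ 3. Then the group GL(n,ℤ)_odd is generated by the n×n permutation matrices together with the three matrices M_θ = diag(−1,1,…,1), M_μ = I_n + 2E_{21}, and M_ν = I_n + E_{21} + E_{31}, where E_{ij} denotes the matrix with a single nonzero entry 1 in position (i,j). -/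
open Matrix Finset

namespace GLodd
variable {n : ℕ}

abbrev R (n : ℕ) := Matrix (Fin n) (Fin n) ℤ
abbrev GLn (n : ℕ) := Matrix.GeneralLinearGroup (Fin n) ℤ

/-- permutation matrix -/
def P (σ : Equiv.Perm (Fin n)) : R n := Matrix.of fun i j => if i = σ j then 1 else 0

lemma P_mul_apply (σ : Equiv.Perm (Fin n)) (M : R n) (i j : Fin n) :
    (P σ * M) i j = M (σ⁻¹ i) j := by
  rw [mul_apply]
  have : ∀ k, P σ i k * M k j = if k = σ⁻¹ i then M k j else 0 := by
    intro k
    simp only [P, of_apply]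
    rcases eq_or_ne k (σ⁻¹ i) with h | h
    · subst h; simp
    · rw [if_neg, if_neg h, zero_mul]
      intro hi; apply h; rw [hi]; simp
  simp [this]

lemma mul_P_apply (σ : Equiv.Perm (Fin n)) (M : R n) (i j : Fin n) :
    (M * P σ) i j = M i (σ j) := by
  rw [mul_apply]
  have : ∀ k, M i k * P σ k j = if k = σ j then M i k else 0 := by
    intro k
    simp only [P, of_apply]
    rcases eq_or_ne k (σ j) with h | h
    · subst h; simp
    · simp [h]
  simp [this]

lemma P_mul (σ τ : Equiv.Perm (Fin n)) : P σ * P τ = P (σ * τ) := by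
  ext i j
  rw [P_mul_apply]
  simp only [P, of_apply, Equiv.Perm.mul_apply, Equiv.Perm.inv_def, Equiv.symm_apply_eq]
  congr

lemma P_one : P (1 : Equiv.Perm (Fin n)) = 1 := by
  ext i j
  simp [P, one_apply, eq_comm]
  congr

/-- permutation matrix as a unit -/
def Pu (σ : Equiv.Perm (Fin n)) : GLn n :=
  ⟨P σ, P σ⁻¹, by rw [P_mul, mul_inv_cancel, P_one], by rw [P_mul, inv_mul_cancel, P_one]⟩

@[simp] lemma Pu_val (σ : Equiv.Perm (Fin n)) : (Pu σ : R n) = P σ := rfl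
@[simp] lemma Pu_inv_val (σ : Equiv.Perm (Fin n)) : (↑(Pu σ)⁻¹ : R n) = P σ⁻¹ := rfl

/-- transvection-like matrix 1 + c E_{ab} -/
def Tm (a b : Fin n) (c : ℤ) : R n := 1 + single a b c

lemma Tm_mul_Tm (a b : Fin n) (hab : a ≠ b) (c d : ℤ) :
    Tm a b c * Tm a b d = Tm a b (c + d) := by
  simp only [Tm, add_mul, mul_add, one_mul, mul_one,
    Matrix.single_mul_single_of_ne c a b a (Ne.symm hab) d, single_add]
  abel

def Tu (a b : Fin n) (hab : a ≠ b) (c : ℤ) : GLn n :=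
  ⟨Tm a b c, Tm a b (-c), by rw [Tm_mul_Tm a b hab]; simp [Tm],
    by rw [Tm_mul_Tm a b hab]; simp [Tm]⟩

@[simp] lemma Tu_val (a b : Fin n) (hab : a ≠ b) (c : ℤ) : (Tu a b hab c : R n) = Tm a b c := rfl
@[simp] lemma Tu_inv_val (a b : Fin n) (hab : a ≠ b) (c : ℤ) :
    (↑(Tu a b hab c)⁻¹ : R n) = Tm a b (-c) := rfl

lemma Std_mul_apply (a b : Fin n) (c : ℤ) (M : R n) (i j : Fin n) :
    (single a b c * M) i j = if i = a then c * M b j else 0 := by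
  rw [mul_apply]
  have h : ∀ k, single a b c i k * M k j
      = if b = k then (if a = i then c * M b j else 0) else 0 := by
    intro k
    simp only [single, of_apply]
    by_cases h1 : a = i <;> by_cases h2 : b = k <;> simp [h1, h2]
  rw [Finset.sum_congr rfl (fun k _ => h k), Finset.sum_ite_eq]
  simp [eq_comm]

lemma Tm_mul_apply (a b : Fin n) (c : ℤ) (M : R n) (i j : Fin n) :
    (Tm a b c * M) i j = M i j + if i = a then c * M b j else 0 := by
  simp only [Tm, add_mul, one_mul, Matrix.add_apply, Std_mul_apply]

/-- sign matrix -/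
def Dm (p : Fin n) : R n := Matrix.diagonal (fun i => if i = p then -1 else 1)

lemma Dm_mul_Dm (p : Fin n) : Dm p * Dm p = 1 := by
  ext i j
  simp only [Dm, diagonal_mul_diagonal, diagonal_apply, one_apply]
  rcases eq_or_ne i j with h | h
  · subst h; rcases eq_or_ne i p with h2 | h2 <;> simp [h2]
  · simp [h]

def Du (p : Fin n) : GLn n := ⟨Dm p, Dm p, Dm_mul_Dm p, Dm_mul_Dm p⟩
@[simp] lemma Du_val (p : Fin n) : (Du p : R n) = Dm p := rfl
@[simp] lemma Du_inv_val (p : Fin n) : (↑(Du p)⁻¹ : R n) = Dm p := rfl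

lemma Dm_mul_apply (p : Fin n) (M : R n) (i j : Fin n) :
    (Dm p * M) i j = if i = p then -M i j else M i j := by
  simp only [Dm, diagonal_mul]
  rcases eq_or_ne i p with h | h <;> simp [h]

/-- conjugation by permutation matrices -/
lemma P_conj_apply (σ : Equiv.Perm (Fin n)) (M : R n) (i j : Fin n) :
    (P σ * M * P σ⁻¹) i j = M (σ⁻¹ i) (σ⁻¹ j) := by
  rw [mul_P_apply, P_mul_apply]

lemma P_conj_std (σ : Equiv.Perm (Fin n)) (a b : Fin n) (c : ℤ) :
    P σ * single a b c * P σ⁻¹ = single (σ a) (σ b) c := by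
  ext i j
  rw [P_conj_apply]
  simp only [single, of_apply]
  have h1 : a = σ⁻¹ i ↔ σ a = i := by rw [Equiv.Perm.inv_def, Equiv.eq_symm_apply]
  have h2 : b = σ⁻¹ j ↔ σ b = j := by rw [Equiv.Perm.inv_def, Equiv.eq_symm_apply]
  simp [h1, h2, Equiv.eq_symm_apply]

lemma P_conj_one (σ : Equiv.Perm (Fin n)) : P σ * (1 : R n) * P σ⁻¹ = 1 := by
  rw [mul_one, P_mul, mul_inv_cancel, P_one]

lemma P_conj_Tm (σ : Equiv.Perm (Fin n)) (a b : Fin n) (c : ℤ) :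
    P σ * Tm a b c * P σ⁻¹ = Tm (σ a) (σ b) c := by
  have : P σ * Tm a b c * P σ⁻¹
      = P σ * 1 * P σ⁻¹ + P σ * single a b c * P σ⁻¹ := by
    simp only [Tm]; noncomm_ring
  rw [this, P_conj_one, P_conj_std, Tm]

lemma P_conj_Dm (σ : Equiv.Perm (Fin n)) (p : Fin n) :
    P σ * Dm p * P σ⁻¹ = Dm (σ p) := by
  ext i j
  rw [P_conj_apply]
  simp only [Dm, diagonal_apply]
  have h1 : σ⁻¹ i = σ⁻¹ j ↔ i = j := by
    constructor
    · intro h; simpa using congrArg σ h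
    · intro h; rw [h]
  have h2 : σ⁻¹ i = p ↔ i = σ p := by rw [Equiv.Perm.inv_def, Equiv.symm_apply_eq]
  simp [h1, h2, Equiv.symm_apply_eq]


/-! ### parity helpers -/

lemma odd_iff_cast (a : ℤ) : Odd a ↔ (a : ZMod 2) = 1 := by
  rw [Int.odd_iff, show ((1:ZMod 2) = ((1:ℤ) : ZMod 2)) by norm_num, ZMod.intCast_eq_intCast_iff]
  unfold Int.ModEq; norm_num

lemma even_iff_cast (a : ℤ) : Even a ↔ (a : ZMod 2) = 0 := by
  rw [Int.even_iff, show ((0:ZMod 2) = ((0:ℤ) : ZMod 2)) by norm_num, ZMod.intCast_eq_intCast_iff]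
  unfold Int.ModEq; norm_num

lemma nat_odd_iff_cast (a : ℕ) : Odd a ↔ (a : ZMod 2) = 1 := by
  rw [Nat.odd_iff, show ((1:ZMod 2) = ((1:ℕ) : ZMod 2)) by norm_num, ZMod.natCast_eq_natCast_iff]
  unfold Nat.ModEq; norm_num

/-- parity of a sum equals parity of the number of odd entries -/
lemma odd_sum_iff (s : Finset (Fin n)) (v : Fin n → ℤ) :
    Odd (∑ i ∈ s, v i) ↔ Odd (s.filter (fun i => Odd (v i))).card := by
  rw [odd_iff_cast, nat_odd_iff_cast]
  have : ((∑ i ∈ s, v i : ℤ) : ZMod 2) = ∑ i ∈ s, ((v i : ℤ) : ZMod 2) := by push_cast; ring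
  rw [this]
  have : ∀ i ∈ s, ((v i : ℤ) : ZMod 2) = if Odd (v i) then 1 else 0 := by
    intro i _
    rcases Int.even_or_odd (v i) with h | h
    · rw [if_neg (Int.not_odd_iff_even.2 h), (even_iff_cast _).1 h]
    · rw [if_pos h, (odd_iff_cast _).1 h]
  rw [Finset.sum_congr rfl this, Finset.sum_boole]

/-! ### permutations hitting prescribed values -/

lemma exists_perm1 (x a : Fin n) : ∃ σ : Equiv.Perm (Fin n), σ x = a :=
  ⟨Equiv.swap x a, Equiv.swap_apply_left x a⟩

lemma exists_perm2 (x y a b : Fin n) (hxy : x ≠ y) (hab : a ≠ b) :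
    ∃ σ : Equiv.Perm (Fin n), σ x = a ∧ σ y = b := by
  obtain ⟨τ, hτ⟩ := exists_perm1 x a
  set b' := τ.symm b with hb'
  have hb'x : b' ≠ x := by
    intro h
    apply hab
    rw [← hτ, ← h, hb', Equiv.apply_symm_apply]
  refine ⟨τ * Equiv.swap y b', ?_, ?_⟩
  · simp only [Equiv.Perm.mul_apply]
    rw [Equiv.swap_apply_of_ne_of_ne hxy (Ne.symm hb'x), hτ]
  · simp only [Equiv.Perm.mul_apply]
    rw [Equiv.swap_apply_left, hb', Equiv.apply_symm_apply]

lemma exists_perm3 (x y z a b c : Fin n) (hxy : x ≠ y) (hxz : x ≠ z) (hyz : y ≠ z)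
    (hab : a ≠ b) (hac : a ≠ c) (hbc : b ≠ c) :
    ∃ σ : Equiv.Perm (Fin n), σ x = a ∧ σ y = b ∧ σ z = c := by
  obtain ⟨τ, hτx, hτy⟩ := exists_perm2 x y a b hxy hab
  set c' := τ.symm c with hc'
  have hc'x : c' ≠ x := by
    intro h; apply hac; rw [← hτx, ← h, hc', Equiv.apply_symm_apply]
  have hc'y : c' ≠ y := by
    intro h; apply hbc; rw [← hτy, ← h, hc', Equiv.apply_symm_apply]
  refine ⟨τ * Equiv.swap z c', ?_, ?_, ?_⟩
  · simp only [Equiv.Perm.mul_apply]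
    rw [Equiv.swap_apply_of_ne_of_ne hxz (Ne.symm hc'x), hτx]
  · simp only [Equiv.Perm.mul_apply]
    rw [Equiv.swap_apply_of_ne_of_ne hyz (Ne.symm hc'y), hτy]
  · simp only [Equiv.Perm.mul_apply]
    rw [Equiv.swap_apply_left, hc', Equiv.apply_symm_apply]

/-! ### the generating set -/

variable (n) in
def Sgen (hn : 3 ≤ n) : Set (GLn n) :=
  {g : Matrix.GeneralLinearGroup (Fin n) ℤ |
    (∃ σ : Equiv.Perm (Fin n),
      (g : Matrix (Fin n) (Fin n) ℤ) =
        Matrix.of fun i j => if i = σ j then 1 else 0) ∨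
    (g : Matrix (Fin n) (Fin n) ℤ) =
      Matrix.diagonal (fun i => if i = (⟨0, Nat.lt_of_lt_of_le (by decide) hn⟩ : Fin n) then -1 else 1) ∨
    (g : Matrix (Fin n) (Fin n) ℤ) =
      1 + Matrix.single (⟨1, Nat.lt_of_lt_of_le (by decide) hn⟩ : Fin n) (⟨0, Nat.lt_of_lt_of_le (by decide) hn⟩ : Fin n) 2 ∨
    (g : Matrix (Fin n) (Fin n) ℤ) =
      1 + Matrix.single (⟨1, Nat.lt_of_lt_of_le (by decide) hn⟩ : Fin n) (⟨0, Nat.lt_of_lt_of_le (by decide) hn⟩ : Fin n) 1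
        + Matrix.single (⟨2, Nat.lt_of_lt_of_le (by decide) hn⟩ : Fin n) (⟨0, Nat.lt_of_lt_of_le (by decide) hn⟩ : Fin n) 1}

variable (n) in
def Hgp (hn : 3 ≤ n) : Subgroup (GLn n) := Subgroup.closure (Sgen n hn)

section mems
variable (hn : 3 ≤ n)

def i0 : Fin n := ⟨0, Nat.lt_of_lt_of_le (by decide) hn⟩
def i1 : Fin n := ⟨1, Nat.lt_of_lt_of_le (by decide) hn⟩
def i2 : Fin n := ⟨2, Nat.lt_of_lt_of_le (by decide) hn⟩

lemma i1_ne_i0 : (i1 hn) ≠ i0 hn := by simp [i0, i1, Fin.ext_iff]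
lemma i2_ne_i0 : (i2 hn) ≠ i0 hn := by simp [i0, i2, Fin.ext_iff]
lemma i1_ne_i2 : (i1 hn) ≠ i2 hn := by simp [i1, i2, Fin.ext_iff]

lemma Pu_mem (σ : Equiv.Perm (Fin n)) : Pu σ ∈ Hgp n hn :=
  Subgroup.subset_closure (Or.inl ⟨σ, rfl⟩)

lemma Du_mem (p : Fin n) : Du p ∈ Hgp n hn := by
  obtain ⟨σ, hσ⟩ := exists_perm1 (i0 hn) p
  have base : Du (i0 hn) ∈ Hgp n hn := Subgroup.subset_closure (Or.inr (Or.inl rfl))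
  have : Du p = Pu σ * Du (i0 hn) * (Pu σ)⁻¹ := by
    apply Units.ext
    show Dm p = P σ * Dm (i0 hn) * P σ⁻¹
    rw [P_conj_Dm, hσ]
  rw [this]
  exact mul_mem (mul_mem (Pu_mem hn σ) base) (inv_mem (Pu_mem hn σ))

lemma Tu_neg (a b : Fin n) (hab : a ≠ b) (c : ℤ) :
    Tu a b hab (-c) = (Tu a b hab c)⁻¹ := by
  apply Units.ext; rfl

lemma Tu_zero (a b : Fin n) (hab : a ≠ b) : Tu a b hab 0 = 1 := by
  apply Units.ext
  show Tm a b 0 = 1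
  simp [Tm]

lemma Tu_conj (σ : Equiv.Perm (Fin n)) (a b : Fin n) (hab : a ≠ b) (c : ℤ) :
    Pu σ * Tu a b hab c * (Pu σ)⁻¹
      = Tu (σ a) (σ b) (fun h => hab (σ.injective h)) c := by
  apply Units.ext
  show P σ * Tm a b c * P σ⁻¹ = Tm (σ a) (σ b) c
  exact P_conj_Tm σ a b c

lemma Tu2_mem (a b : Fin n) (hab : a ≠ b) : ∀ m : ℤ, Tu a b hab (2*m) ∈ Hgp n hn := by
  have base : Tu (i1 hn) (i0 hn) (i1_ne_i0 hn) 2 ∈ Hgp n hn := by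
    apply Subgroup.subset_closure
    right; right; left; rfl
  obtain ⟨σ, hσ1, hσ0⟩ := exists_perm2 (i1 hn) (i0 hn) a b (i1_ne_i0 hn) hab
  have h2 : Tu a b hab 2 ∈ Hgp n hn := by
    have h' : Tu a b hab 2 = Pu σ * Tu (i1 hn) (i0 hn) (i1_ne_i0 hn) 2 * (Pu σ)⁻¹ := by
      apply Units.ext
      show Tm a b 2 = P σ * Tm (i1 hn) (i0 hn) 2 * P σ⁻¹
      rw [P_conj_Tm, hσ1, hσ0]
    rw [h']
    exact mul_mem (mul_mem (Pu_mem hn σ) base) (inv_mem (Pu_mem hn σ))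
  intro m
  induction m using Int.induction_on with
  | zero => rw [mul_zero, Tu_zero]; exact one_mem _
  | succ k ih =>
      have : Tu a b hab (2*(k+1)) = Tu a b hab (2*k) * Tu a b hab 2 := by
        apply Units.ext
        show Tm a b (2*(k+1)) = Tm a b (2*k) * Tm a b 2
        rw [Tm_mul_Tm a b hab]; ring_nf
      rw [this]; exact mul_mem ih h2
  | pred k ih =>
      have : Tu a b hab (2*(-(k:ℤ)-1)) = Tu a b hab (2*(-(k:ℤ))) * Tu a b hab (-2) := by
        apply Units.ext
        show Tm a b (2*(-(k:ℤ)-1)) = Tm a b (2*(-(k:ℤ))) * Tm a b (-2)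
        rw [Tm_mul_Tm a b hab]; ring_nf
      rw [this, Tu_neg]
      exact mul_mem ih (inv_mem h2)

lemma Bu_mem (a b s : Fin n) (hab : a ≠ b) (has : a ≠ s) (hbs : b ≠ s) :
    Tu a s has 1 * Tu b s hbs 1 ∈ Hgp n hn := by
  have base : Tu (i1 hn) (i0 hn) (i1_ne_i0 hn) 1 * Tu (i2 hn) (i0 hn) (i2_ne_i0 hn) 1
      ∈ Hgp n hn := by
    apply Subgroup.subset_closure
    right; right; right
    show Tm (i1 hn) (i0 hn) 1 * Tm (i2 hn) (i0 hn) 1 = _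
    have h0 : single (i1 hn) (i0 hn) (1:ℤ) * single (i2 hn) (i0 hn) 1 = 0 :=
      Matrix.single_mul_single_of_ne _ _ _ _ (i2_ne_i0 hn).symm _
    simp only [Tm, add_mul, mul_add, one_mul, mul_one, h0, add_zero]
    abel
  obtain ⟨σ, hσ1, hσ2, hσ0⟩ := exists_perm3 (i1 hn) (i2 hn) (i0 hn) a b s
    (i1_ne_i2 hn) (i1_ne_i0 hn) (i2_ne_i0 hn) hab has hbs
  have key : Tu a s has 1 * Tu b s hbs 1
      = Pu σ * (Tu (i1 hn) (i0 hn) (i1_ne_i0 hn) 1 * Tu (i2 hn) (i0 hn) (i2_ne_i0 hn) 1)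
        * (Pu σ)⁻¹ := by
    apply Units.ext
    show Tm a s 1 * Tm b s 1 = P σ * (Tm (i1 hn) (i0 hn) 1 * Tm (i2 hn) (i0 hn) 1) * P σ⁻¹
    have : P σ * (Tm (i1 hn) (i0 hn) 1 * Tm (i2 hn) (i0 hn) 1) * P σ⁻¹
        = (P σ * Tm (i1 hn) (i0 hn) 1 * P σ⁻¹) * (P σ * Tm (i2 hn) (i0 hn) 1 * P σ⁻¹) := by
      have hP : P σ⁻¹ * P σ = 1 := by rw [P_mul, inv_mul_cancel, P_one]
      calc P σ * (Tm (i1 hn) (i0 hn) 1 * Tm (i2 hn) (i0 hn) 1) * P σ⁻¹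
          = P σ * Tm (i1 hn) (i0 hn) 1 * (P σ⁻¹ * P σ) * Tm (i2 hn) (i0 hn) 1 * P σ⁻¹ := by
            rw [hP]; noncomm_ring
        _ = _ := by noncomm_ring
    rw [this, P_conj_Tm, P_conj_Tm, hσ1, hσ2, hσ0]
  rw [key]
  exact mul_mem (mul_mem (Pu_mem hn σ) base) (inv_mem (Pu_mem hn σ))

end mems

/-! ### odd column sums -/

def OddCols (g : GLn n) : Prop := ∀ j, Odd (∑ i, (↑g : R n) i j)

lemma colsum_mul (A B : R n) (j : Fin n) :
    ∑ i, (A * B) i j = ∑ k, (∑ i, A i k) * B k j := by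
  simp_rw [mul_apply, Finset.sum_mul]
  exact Finset.sum_comm

lemma oddcols_mul_right (A B : R n) (hA : ∀ k, Odd (∑ i, A i k)) (j : Fin n) :
    ((∑ i, (A * B) i j : ℤ) : ZMod 2) = ((∑ k, B k j : ℤ) : ZMod 2) := by
  rw [colsum_mul, Int.cast_sum, Int.cast_sum]
  apply Finset.sum_congr rfl
  intro k _
  rw [Int.cast_mul, (odd_iff_cast _).1 (hA k), one_mul]

lemma OddCols.one : OddCols (1 : GLn n) := by
  intro j
  have : ∀ i : Fin n, ((1 : GLn n) : R n) i j = if i = j then 1 else 0 := by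
    intro i; rw [Units.val_one, one_apply]
  rw [Finset.sum_congr rfl (fun i _ => this i), Finset.sum_ite_eq' Finset.univ j (fun _ => (1:ℤ))]
  simp

lemma OddCols.mul {g h : GLn n} (hg : OddCols g) (hh : OddCols h) : OddCols (g * h) := by
  intro j
  rw [odd_iff_cast]
  have hc : ((g * h : GLn n) : R n) = (↑g : R n) * (↑h : R n) := Units.val_mul g h
  rw [hc, oddcols_mul_right _ _ hg j, ← odd_iff_cast]
  exact hh j

lemma OddCols.inv {g : GLn n} (hg : OddCols g) : OddCols g⁻¹ := by
  intro j
  rw [odd_iff_cast]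
  have hc : (↑g : R n) * (↑g⁻¹ : R n) = 1 := g.mul_inv
  have h1 : ((∑ i, ((1 : R n)) i j : ℤ) : ZMod 2) = 1 := by
    have : ∀ i : Fin n, (1 : R n) i j = if i = j then 1 else 0 := fun i => one_apply
    rw [Finset.sum_congr rfl (fun i _ => this i),
      Finset.sum_ite_eq' Finset.univ j (fun _ => (1:ℤ))]
    simp
  have := oddcols_mul_right (↑g : R n) (↑g⁻¹ : R n) (fun k => hg k) j
  rw [hc, h1] at this
  exact this.symm

variable (n) in
def SoddSub : Subgroup (GLn n) where
  carrier := {g | OddCols g}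
  one_mem' := OddCols.one
  mul_mem' := fun ha hb => OddCols.mul ha hb
  inv_mem' := fun ha => OddCols.inv ha

lemma colsum_std (a b : Fin n) (c : ℤ) (j : Fin n) :
    ∑ i, single a b c i j = if b = j then c else 0 := by
  by_cases hb : b = j
  · subst hb
    have : ∀ i : Fin n, single a b c i b = if i = a then c else 0 := by
      intro i
      simp only [single, of_apply]
      by_cases h : a = i <;> simp [h, eq_comm]
    rw [Finset.sum_congr rfl (fun i _ => this i), Finset.sum_ite_eq' Finset.univ a fun _ => c]
    simp
  · have : ∀ i : Fin n, single a b c i j = 0 := by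
      intro i; simp [single, hb]
    simp [Finset.sum_congr rfl (fun i _ => this i), hb]

lemma colsum_one (j : Fin n) : ∑ i, (1 : R n) i j = 1 := by
  have : ∀ i : Fin n, (1 : R n) i j = if i = j then 1 else 0 := fun i => one_apply
  rw [Finset.sum_congr rfl (fun i _ => this i), Finset.sum_ite_eq' Finset.univ j (fun _ => (1:ℤ))]
  simp

lemma Hgp_le_odd (hn : 3 ≤ n) : ∀ g ∈ Hgp n hn, OddCols g := by
  intro g hg
  have : Hgp n hn ≤ SoddSub n := by
    rw [Hgp, Subgroup.closure_le]
    rintro x (⟨σ, hx⟩ | hx | hx | hx) <;> intro j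
    · have hi : ∀ i : Fin n, (↑x : R n) i j = if i = σ j then 1 else 0 := fun i => by
        rw [hx]; rfl
      rw [Finset.sum_congr rfl (fun i _ => hi i),
        Finset.sum_ite_eq' Finset.univ (σ j) (fun _ => (1:ℤ))]
      simp
    · have hi : ∀ i : Fin n, (↑x : R n) i j
          = if i = j then (if i = (⟨0, by omega⟩ : Fin n) then -1 else 1) else 0 := fun i => by
        rw [hx]; exact diagonal_apply _ i j
      rw [Finset.sum_congr rfl (fun i _ => hi i), Finset.sum_ite_eq' Finset.univ j]
      by_cases h : j = (⟨0, by omega⟩ : Fin n) <;> simp [h] <;> decide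
    · have hi : ∀ i : Fin n, (↑x : R n) i j
          = (1 : R n) i j + single (⟨1, by omega⟩ : Fin n) (⟨0, by omega⟩ : Fin n) 2 i j := fun i => by
        rw [hx]; rfl
      rw [Finset.sum_congr rfl (fun i _ => hi i), Finset.sum_add_distrib, colsum_one, colsum_std]
      by_cases h : (⟨0, by omega⟩ : Fin n) = j <;> simp [h] <;> decide
    · have hi : ∀ i : Fin n, (↑x : R n) i j
          = (1 : R n) i j + single (⟨1, by omega⟩ : Fin n) (⟨0, by omega⟩ : Fin n) 1 i j
            + single (⟨2, by omega⟩ : Fin n) (⟨0, by omega⟩ : Fin n) 1 i j := fun i => by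
        rw [hx]; rfl
      rw [Finset.sum_congr rfl (fun i _ => hi i), Finset.sum_add_distrib,
        Finset.sum_add_distrib, colsum_one, colsum_std, colsum_std]
      by_cases h : (⟨0, by omega⟩ : Fin n) = j <;> simp [h] <;> decide
  exact this hg


/-! ### identity columns -/

def Idc (g : GLn n) (k : ℕ) : Prop :=
  ∀ i j : Fin n, (j:ℕ) < k → (↑g : R n) i j = if i = j then 1 else 0

lemma Idc.inv {g : GLn n} {k : ℕ} (hg : Idc g k) : Idc g⁻¹ k := by
  intro i j hj
  have key : (↑g⁻¹ : R n) i j = ((↑g⁻¹ : R n) * (↑g : R n)) i j := by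
    rw [mul_apply]
    rw [Finset.sum_congr rfl (fun m (_ : m ∈ Finset.univ) => by rw [hg m j hj])]
    have : ∀ m : Fin n, (↑g⁻¹ : R n) i m * (if m = j then (1:ℤ) else 0)
        = if m = j then (↑g⁻¹ : R n) i m else 0 := by
      intro m; split <;> simp
    rw [Finset.sum_congr rfl (fun m _ => this m), Finset.sum_ite_eq' Finset.univ j]
    simp
  rw [key, g.inv_mul, one_apply]

lemma comb_sum {g : GLn n} {k : ℕ} (hk : k < n) (hg : Idc g k) :
    ∑ m ∈ Finset.univ.filter (fun m : Fin n => k ≤ (m:ℕ)),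
      (↑g⁻¹ : R n) ⟨k,hk⟩ m * (↑g : R n) m ⟨k,hk⟩ = 1 := by
  have h1 : ∑ m : Fin n, (↑g⁻¹ : R n) ⟨k,hk⟩ m * (↑g : R n) m ⟨k,hk⟩ = 1 := by
    rw [← mul_apply, g.inv_mul, one_apply_eq]
  rw [← h1]
  apply Finset.sum_subset (Finset.filter_subset _ _)
  intro m _ hm
  simp only [Finset.mem_filter, Finset.mem_univ, true_and, not_le] at hm
  rw [hg.inv ⟨k,hk⟩ m hm, if_neg, zero_mul]
  intro h
  have : k = (m : ℕ) := congrArg Fin.val h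
  omega

lemma exists_odd_low {g : GLn n} {k : ℕ} (hk : k < n) (hg : Idc g k) :
    ∃ m : Fin n, k ≤ (m:ℕ) ∧ Odd ((↑g : R n) m ⟨k,hk⟩) := by
  by_contra hall
  push_neg at hall
  have h1 := comb_sum hk hg
  have h2 : ((1:ℤ) : ZMod 2) =
      ((∑ m ∈ Finset.univ.filter (fun m : Fin n => k ≤ (m:ℕ)),
        (↑g⁻¹ : R n) ⟨k,hk⟩ m * (↑g : R n) m ⟨k,hk⟩ : ℤ) : ZMod 2) := by rw [h1]
  rw [Int.cast_sum] at h2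
  have h3 : ∀ m ∈ Finset.univ.filter (fun m : Fin n => k ≤ (m:ℕ)),
      (((↑g⁻¹ : R n) ⟨k,hk⟩ m * (↑g : R n) m ⟨k,hk⟩ : ℤ) : ZMod 2) = 0 := by
    intro m hm
    simp only [Finset.mem_filter, Finset.mem_univ, true_and] at hm
    have := hall m hm
    rw [Int.not_odd_iff_even] at this
    rw [Int.cast_mul, (even_iff_cast _).1 this, mul_zero]
  rw [Finset.sum_congr rfl h3] at h2
  simp at h2

lemma low_unit {g : GLn n} {k : ℕ} (hk : k < n) (hg : Idc g k) (p : Fin n)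
    (hp : k ≤ (p:ℕ))
    (hz : ∀ m : Fin n, k ≤ (m:ℕ) → m ≠ p → (↑g : R n) m ⟨k,hk⟩ = 0) :
    (↑g : R n) p ⟨k,hk⟩ = 1 ∨ (↑g : R n) p ⟨k,hk⟩ = -1 := by
  have h1 := comb_sum hk hg
  rw [Finset.sum_eq_single_of_mem p (by simp [hp])
    (fun b _ hbp => by
      rw [hz b (by simpa using ‹b ∈ Finset.univ.filter _›) hbp, mul_zero])] at h1
  have : IsUnit ((↑g : R n) p ⟨k,hk⟩) := IsUnit.of_mul_eq_one _ (by rw [mul_comm]; exact h1)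
  exact Int.isUnit_iff.1 this

/-! ### division with even quotient -/

lemma div_lemma (a d : ℤ) (hd : d ≠ 0) :
    ∃ q r : ℤ, a + 2*d*q = r ∧ r.natAbs ≤ d.natAbs := by
  set ad : ℤ := (d.natAbs : ℤ) with had_def
  have had : ad = d ∨ ad = -d := by
    rcases Int.natAbs_eq d with h | h
    · left; rw [had_def, ← h]
    · right; rw [had_def]; omega
  have hadpos : 0 < ad := by
    have : d.natAbs ≠ 0 := Int.natAbs_ne_zero.2 hd
    omega
  set m : ℤ := 2 * ad with hm_def
  have hm : 0 < m := by omega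
  have h0 : 0 ≤ a % m := Int.emod_nonneg a (by omega)
  have h1 : a % m < m := Int.emod_lt_of_pos a hm
  have hmod : a - m * (a / m) = a % m := by rw [Int.emod_def]
  rcases le_or_gt (a % m) ad with hle | hlt
  · obtain ⟨q, hq⟩ : ∃ q, 2 * d * q = -(m * (a / m)) := by
      rcases had with h | h
      · exact ⟨-(a / m), by rw [hm_def, h]; ring⟩
      · exact ⟨a / m, by rw [hm_def, h]; ring⟩
    exact ⟨q, a % m, by omega, by omega⟩
  · obtain ⟨q, hq⟩ : ∃ q, 2 * d * q = -(m * (a / m)) - m := by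
      rcases had with h | h
      · exact ⟨-(a / m) - 1, by rw [hm_def, h]; ring⟩
      · exact ⟨a / m + 1, by rw [hm_def, h]; ring⟩
    exact ⟨q, a % m - m, by omega, by omega⟩


/-! ### effect of a double transvection -/

lemma TT_mul_apply (a b s : Fin n) (hbs : b ≠ s) (M : R n) (i j : Fin n) :
    ((Tm a s 1 * Tm b s 1) * M) i j
      = M i j + ((if i = a then M s j else 0) + (if i = b then M s j else 0)) := by
  rw [mul_assoc, Tm_mul_apply, Tm_mul_apply, Tm_mul_apply]
  simp only [one_mul, if_neg (Ne.symm hbs)]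
  split_ifs <;> ring

lemma odd_add_odd' {x y : ℤ} (hx : Odd x) (hy : Odd y) : ¬ Odd (x + y) := by
  rcases hx with ⟨u, rfl⟩; rcases hy with ⟨v, rfl⟩
  rw [Int.not_odd_iff_even]; exact ⟨u + v + 1, by ring⟩

lemma odd_add_even_iff {x y : ℤ} (hy : Even y) : Odd (x + y) ↔ Odd x := by
  rcases hy with ⟨v, rfl⟩
  constructor
  · rintro ⟨u, hu⟩; exact ⟨u - v, by omega⟩
  · rintro ⟨u, hu⟩; exact ⟨u + v, by omega⟩

section phases
variable (hn : 3 ≤ n)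

lemma phaseA (k : ℕ) (hk : k < n) :
    ∀ N : ℕ, ∀ g : GLn n,
      (Finset.univ.filter
        (fun m : Fin n => k ≤ (m:ℕ) ∧ Odd ((↑g : R n) m ⟨k,hk⟩))).card = N →
      Idc g k → OddCols g →
      ∃ h ∈ Hgp n hn, Idc (h*g) k ∧ OddCols (h*g) ∧
        ∃ p : Fin n, k ≤ (p:ℕ) ∧
          ∀ m : Fin n, k ≤ (m:ℕ) → (Odd ((↑(h*g) : R n) m ⟨k,hk⟩) ↔ m = p) := by
  intro N
  induction N using Nat.strong_induction_on with
  | _ N ih =>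
  intro g hcard hIdc hOdd
  set κ : Fin n := ⟨k, hk⟩ with hκ
  set L := Finset.univ.filter
    (fun m : Fin n => k ≤ (m:ℕ) ∧ Odd ((↑g : R n) m κ)) with hL
  have memL : ∀ m : Fin n, m ∈ L ↔ (k ≤ (m:ℕ) ∧ Odd ((↑g : R n) m κ)) := by
    intro m; simp [hL]
  obtain ⟨p₀, hp₀k, hp₀odd⟩ := exists_odd_low hk hIdc
  have hp₀L : p₀ ∈ L := (memL p₀).2 ⟨hp₀k, hp₀odd⟩
  have hNpos : 0 < N := by
    rcases Nat.eq_zero_or_pos N with h | h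
    · exfalso; rw [← hcard] at h; rw [Finset.card_eq_zero] at h
      rw [h] at hp₀L; exact absurd hp₀L (Finset.notMem_empty p₀)
    · exact h
  rcases eq_or_ne N 1 with hN1 | hN1
  · -- already exactly one odd entry
    refine ⟨1, one_mem _, by rwa [one_mul], by rwa [one_mul], p₀, hp₀k, ?_⟩
    intro m hm
    rw [one_mul]
    subst hN1
    obtain ⟨p, hp⟩ := Finset.card_eq_one.1 hcard
    have hp₀ : p₀ = p := by have := hp₀L; rw [hp] at this; simpa using this
    subst hp₀
    constructor
    · intro hodd
      have : m ∈ L := (memL m).2 ⟨hm, hodd⟩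
      rw [hp] at this; simpa using this
    · rintro rfl; exact hp₀odd
  rcases eq_or_ne N 2 with hN2 | hN2
  · -- two odd low entries; use an odd upper entry as second target
    subst hN2
    obtain ⟨a, haL, b, hbL, hab⟩ := Finset.one_lt_card.1 (by omega : 1 < L.card)
    -- find odd upper entry
    set F := Finset.univ.filter (fun i : Fin n => Odd ((↑g : R n) i κ)) with hF
    have hFodd : Odd F.card := by
      rw [← odd_sum_iff]
      exact hOdd κ
    have hLF : L = F.filter (fun m : Fin n => k ≤ (m:ℕ)) := by
      ext m; simp [hL, hF]; tauto
    have hsplit := Finset.card_filter_add_card_filter_not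
      (s := F) (p := fun m : Fin n => k ≤ (m:ℕ))
    have hupp : 0 < (F.filter (fun m : Fin n => ¬ k ≤ (m:ℕ))).card := by
      rw [← hLF] at hsplit
      rcases hFodd with ⟨t, ht⟩
      omega
    obtain ⟨u, hu⟩ := Finset.card_pos.1 hupp
    have huk : (u:ℕ) < k := by
      have := (Finset.mem_filter.1 hu).2; omega
    have hbk : k ≤ (b:ℕ) := ((memL b).1 hbL).1
    have hak : k ≤ (a:ℕ) := ((memL a).1 haL).1
    have haODD : Odd ((↑g : R n) a κ) := ((memL a).1 haL).2
    have hbODD : Odd ((↑g : R n) b κ) := ((memL b).1 hbL).2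
    have hau : a ≠ u := fun h => by rw [h] at hak; omega
    have hub : u ≠ b := fun h => by rw [h] at huk; omega
    set W : GLn n := Tu a b hab 1 * Tu u b hub 1 with hW
    have hWmem : W ∈ Hgp n hn := Bu_mem hn a u b hau hab hub
    have hWg : ∀ i j, (↑(W*g) : R n) i j = (↑g : R n) i j
        + ((if i = a then (↑g : R n) b j else 0) + (if i = u then (↑g : R n) b j else 0)) := by
      intro i j
      rw [Units.val_mul, hW, Units.val_mul, Tu_val, Tu_val, TT_mul_apply a u b hub]
    have hIdc' : Idc (W*g) k := by
      intro i j hj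
      rw [hWg i j, hIdc i j hj, hIdc b j hj, if_neg (fun h : b = j => by
        rw [h] at hbk; omega)]
      simp
    refine ⟨W, hWmem, hIdc', OddCols.mul (Hgp_le_odd hn W hWmem) hOdd, b, hbk, ?_⟩
    -- L = {a, b}
    have hLab : L = {a, b} := by
      symm
      apply Finset.eq_of_subset_of_card_le
      · intro x hx
        rcases Finset.mem_insert.1 hx with rfl | hx
        · exact haL
        · rw [Finset.mem_singleton.1 hx]; exact hbL
      · rw [hcard, Finset.card_insert_of_notMem (by simpa using hab),
          Finset.card_singleton]
    intro m hm
    have hmu : m ≠ u := fun h => by rw [h] at hm; omega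
    rw [hWg m κ, if_neg hmu, add_zero]
    rcases eq_or_ne m a with rfl | hma
    · rw [if_pos rfl]
      constructor
      · intro h; exact absurd h (odd_add_odd' haODD hbODD)
      · intro h; exact absurd h hab
    · rw [if_neg hma, add_zero]
      constructor
      · intro h
        have : m ∈ L := (memL m).2 ⟨hm, h⟩
        rw [hLab] at this
        rcases Finset.mem_insert.1 this with h' | h'
        · exact absurd h' hma
        · exact Finset.mem_singleton.1 h'
      · rintro rfl; exact hbODD
  · -- at least three odd low entries
    have hN3 : 2 < N := by omega
    rw [← hcard] at hN3
    obtain ⟨a, b, c, haL, hbL, hcL, hab, hac, hbc⟩ := Finset.two_lt_card_iff.1 hN3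
    have hak : k ≤ (a:ℕ) := ((memL a).1 haL).1
    have hbk : k ≤ (b:ℕ) := ((memL b).1 hbL).1
    have hck : k ≤ (c:ℕ) := ((memL c).1 hcL).1
    have haODD : Odd ((↑g : R n) a κ) := ((memL a).1 haL).2
    have hbODD : Odd ((↑g : R n) b κ) := ((memL b).1 hbL).2
    have hcODD : Odd ((↑g : R n) c κ) := ((memL c).1 hcL).2
    set W : GLn n := Tu a c hac 1 * Tu b c hbc 1 with hW
    have hWmem : W ∈ Hgp n hn := Bu_mem hn a b c hab hac hbc
    have hWg : ∀ i j, (↑(W*g) : R n) i j = (↑g : R n) i j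
        + ((if i = a then (↑g : R n) c j else 0) + (if i = b then (↑g : R n) c j else 0)) := by
      intro i j
      rw [Units.val_mul, hW, Units.val_mul, Tu_val, Tu_val, TT_mul_apply a b c hbc]
    have hIdc' : Idc (W*g) k := by
      intro i j hj
      rw [hWg i j, hIdc i j hj, hIdc c j hj, if_neg (fun h : c = j => by
        rw [h] at hck; omega)]
      simp
    have hOdd' : OddCols (W*g) := OddCols.mul (Hgp_le_odd hn W hWmem) hOdd
    have hL' : Finset.univ.filter
        (fun m : Fin n => k ≤ (m:ℕ) ∧ Odd ((↑(W*g) : R n) m κ)) = (L.erase a).erase b := by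
      ext m
      simp only [Finset.mem_filter, Finset.mem_univ, true_and, Finset.mem_erase]
      rw [hWg m κ]
      rcases eq_or_ne m a with rfl | hma
      · rw [if_pos rfl, if_neg hab, add_zero]
        constructor
        · rintro ⟨_, hodd⟩; exact absurd hodd (odd_add_odd' haODD hcODD)
        · rintro ⟨_, h, _⟩; exact absurd rfl h
      · rw [if_neg hma]
        rcases eq_or_ne m b with rfl | hmb
        · rw [if_pos rfl, zero_add]
          constructor
          · rintro ⟨_, hodd⟩; exact absurd hodd (odd_add_odd' hbODD hcODD)
          · rintro ⟨h, _⟩; exact absurd rfl h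
        · rw [if_neg hmb, add_zero, add_zero]
          rw [memL m]
          tauto
    have hcard' : ((L.erase a).erase b).card = N - 2 := by
      have hbmem : b ∈ L.erase a := Finset.mem_erase.2 ⟨Ne.symm hab, hbL⟩
      rw [Finset.card_erase_of_mem hbmem, Finset.card_erase_of_mem haL, hcard]
      omega
    obtain ⟨h', hh'mem, hh'Idc, hh'Odd, p, hpk, hp⟩ :=
      ih (N-2) (by omega) (W*g) (by rw [hL', hcard']) hIdc' hOdd'
    refine ⟨h' * W, mul_mem hh'mem hWmem, ?_, ?_, p, hpk, ?_⟩
    · rw [mul_assoc]; exact hh'Idc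
    · rw [mul_assoc]; exact hh'Odd
    · rw [mul_assoc]; exact hp


lemma phaseB_term (k : ℕ) (hk : k < n) (g : GLn n) (hIdc : Idc g k) (hOdd : OddCols g)
    (p : Fin n) (hp : k ≤ (p:ℕ))
    (hz : ∀ m : Fin n, k ≤ (m:ℕ) → m ≠ p → (↑g : R n) m ⟨k,hk⟩ = 0)
    (h1 : (↑g : R n) p ⟨k,hk⟩ = 1) :
    ∃ h ∈ Hgp n hn, Idc (h*g) k ∧ OddCols (h*g) ∧
      (∀ m : Fin n, k ≤ (m:ℕ) → (↑(h*g) : R n) m ⟨k,hk⟩ = if m = ⟨k,hk⟩ then 1 else 0) := by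
  set κ : Fin n := ⟨k, hk⟩ with hκ
  set σ : Equiv.Perm (Fin n) := Equiv.swap κ p with hσ
  have hPg : ∀ i j, (↑(Pu σ * g) : R n) i j = (↑g : R n) (σ i) j := by
    intro i j
    rw [Units.val_mul, Pu_val, P_mul_apply,
      show σ⁻¹ = σ from by rw [hσ]; exact Equiv.swap_inv κ p]
  have hκk : (κ:ℕ) = k := rfl
  refine ⟨Pu σ, Pu_mem hn σ, ?_, OddCols.mul (Hgp_le_odd hn _ (Pu_mem hn σ)) hOdd, ?_⟩
  · intro i j hj
    rw [hPg i j]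
    rcases eq_or_ne i κ with rfl | hiκ
    · rw [hσ, Equiv.swap_apply_left, hIdc p j hj,
        if_neg (fun h : p = j => by rw [h] at hp; omega),
        if_neg (fun h : κ = j => by rw [← h] at hj; omega)]
    · rcases eq_or_ne i p with rfl | hip
      · rw [hσ, Equiv.swap_apply_right, hIdc κ j hj,
          if_neg (fun h : κ = j => by rw [← h] at hj; omega),
          if_neg (fun h : i = j => by rw [h] at hp; omega)]
      · rw [hσ, Equiv.swap_apply_of_ne_of_ne hiκ hip, hIdc i j hj]
  · intro m hm
    rw [hPg m κ]
    rcases eq_or_ne m κ with rfl | hmκ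
    · rw [hσ, Equiv.swap_apply_left, h1, if_pos rfl]
    · rcases eq_or_ne m p with rfl | hmp
      · rw [hσ, Equiv.swap_apply_right, hz κ (le_of_eq hκk.symm) (fun h => hmκ h.symm),
          if_neg hmκ]
      · rw [hσ, Equiv.swap_apply_of_ne_of_ne hmκ hmp, hz m hm hmp, if_neg hmκ]

lemma phaseB (k : ℕ) (hk : k < n) :
    ∀ N : ℕ, ∀ g : GLn n,
      (∑ m ∈ Finset.univ.filter (fun m : Fin n => k ≤ (m:ℕ)),
        ((↑g : R n) m ⟨k,hk⟩).natAbs) = N →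
      Idc g k → OddCols g →
      ∀ p : Fin n, k ≤ (p:ℕ) →
      (∀ m : Fin n, k ≤ (m:ℕ) → (Odd ((↑g : R n) m ⟨k,hk⟩) ↔ m = p)) →
      ∃ h ∈ Hgp n hn, Idc (h*g) k ∧ OddCols (h*g) ∧
        (∀ m : Fin n, k ≤ (m:ℕ) → (↑(h*g) : R n) m ⟨k,hk⟩ = if m = ⟨k,hk⟩ then 1 else 0) := by
  intro N
  induction N using Nat.strong_induction_on with
  | _ N ih =>
  intro g hsum hIdc hOdd p hp hodd
  set κ : Fin n := ⟨k, hk⟩ with hκ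
  have hA : Odd ((↑g : R n) p κ) := (hodd p hp).2 rfl
  by_cases hb : ∃ b : Fin n, k ≤ (b:ℕ) ∧ b ≠ p ∧ (↑g : R n) b κ ≠ 0
  · obtain ⟨b, hbk, hbp, hbne⟩ := hb
    have hbeven : Even ((↑g : R n) b κ) := by
      rw [← Int.not_odd_iff_even]
      intro h
      exact hbp ((hodd b hbk).1 h)
    have hAne : (↑g : R n) p κ ≠ 0 := by
      rcases hA with ⟨t, ht⟩; omega
    have hpb : p ≠ b := Ne.symm hbp
    have habs : ((↑g : R n) b κ).natAbs ≠ ((↑g : R n) p κ).natAbs := by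
      rcases hA with ⟨t, ht⟩; rcases hbeven with ⟨u, hu⟩
      intro h; omega
    have hκmem : κ ∈ Finset.univ.filter (fun m : Fin n => k ≤ (m:ℕ)) := by simp [hκ]
    rcases lt_or_gt_of_ne habs with hlt | hgt
    · -- |b entry| < |p entry| : reduce p entry modulo p... reduce the p entry mod 2·(b entry)
      obtain ⟨q, r, hqr, hrle⟩ := div_lemma ((↑g : R n) p κ) ((↑g : R n) b κ) hbne
      set W : GLn n := Tu p b hpb (2*q) with hW
      have hWmem : W ∈ Hgp n hn := Tu2_mem hn p b hpb q
      have hWg : ∀ i j, (↑(W*g) : R n) i j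
          = (↑g : R n) i j + (if i = p then 2*q * (↑g : R n) b j else 0) := by
        intro i j
        rw [Units.val_mul, hW, Tu_val, Tm_mul_apply]
      have hIdc' : Idc (W*g) k := by
        intro i j hj
        rw [hWg i j, hIdc i j hj, hIdc b j hj,
          if_neg (fun h : b = j => by rw [h] at hbk; omega)]
        simp
      have hOdd' : OddCols (W*g) := OddCols.mul (Hgp_le_odd hn W hWmem) hOdd
      have hnewp : (↑(W*g) : R n) p κ = r := by
        rw [hWg p κ, if_pos rfl, ← hqr]; ring
      have hother : ∀ m : Fin n, m ≠ p → (↑(W*g) : R n) m κ = (↑g : R n) m κ := by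
        intro m hmp; rw [hWg m κ, if_neg hmp, add_zero]
      have hodd' : ∀ m : Fin n, k ≤ (m:ℕ) → (Odd ((↑(W*g) : R n) m κ) ↔ m = p) := by
        intro m hm
        rcases eq_or_ne m p with rfl | hmp
        · rw [hWg m κ, if_pos rfl]
          rw [odd_add_even_iff ⟨q * (↑g : R n) b κ, by ring⟩]
          simp [hA]
        · rw [hother m hmp]; exact hodd m hm
      have hmsum : (∑ m ∈ Finset.univ.filter (fun m : Fin n => k ≤ (m:ℕ)),
          ((↑(W*g) : R n) m κ).natAbs) < N := by
        rw [← hsum]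
        apply Finset.sum_lt_sum
        · intro m hm
          rcases eq_or_ne m p with rfl | hmp
          · rw [hnewp]; omega
          · rw [hother m hmp]
        · refine ⟨p, by simp [hp], ?_⟩
          rw [hnewp]; omega
      obtain ⟨h', hh'mem, hh'Idc, hh'Odd, hh'done⟩ :=
        ih _ hmsum (W*g) rfl hIdc' hOdd' p hp hodd'
      refine ⟨h' * W, mul_mem hh'mem hWmem, ?_, ?_, ?_⟩
      · rw [mul_assoc]; exact hh'Idc
      · rw [mul_assoc]; exact hh'Odd
      · rw [mul_assoc]; exact hh'done
    · -- |p entry| < |b entry| : reduce the b entry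
      obtain ⟨q, r, hqr, hrle⟩ := div_lemma ((↑g : R n) b κ) ((↑g : R n) p κ) hAne
      set W : GLn n := Tu b p hbp (2*q) with hW
      have hWmem : W ∈ Hgp n hn := Tu2_mem hn b p hbp q
      have hWg : ∀ i j, (↑(W*g) : R n) i j
          = (↑g : R n) i j + (if i = b then 2*q * (↑g : R n) p j else 0) := by
        intro i j
        rw [Units.val_mul, hW, Tu_val, Tm_mul_apply]
      have hIdc' : Idc (W*g) k := by
        intro i j hj
        rw [hWg i j, hIdc i j hj, hIdc p j hj,
          if_neg (fun h : p = j => by rw [h] at hp; omega)]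
        simp
      have hOdd' : OddCols (W*g) := OddCols.mul (Hgp_le_odd hn W hWmem) hOdd
      have hnewb : (↑(W*g) : R n) b κ = r := by
        rw [hWg b κ, if_pos rfl, ← hqr]; ring
      have hother : ∀ m : Fin n, m ≠ b → (↑(W*g) : R n) m κ = (↑g : R n) m κ := by
        intro m hmb; rw [hWg m κ, if_neg hmb, add_zero]
      have hodd' : ∀ m : Fin n, k ≤ (m:ℕ) → (Odd ((↑(W*g) : R n) m κ) ↔ m = p) := by
        intro m hm
        rcases eq_or_ne m b with rfl | hmb
        · rw [hWg m κ, if_pos rfl,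
            odd_add_even_iff ⟨q * (↑g : R n) p κ, by ring⟩]
          constructor
          · intro h; exact absurd ((hodd m hm).1 h) hbp
          · intro h; exact absurd h hbp
        · rw [hother m hmb]; exact hodd m hm
      have hmsum : (∑ m ∈ Finset.univ.filter (fun m : Fin n => k ≤ (m:ℕ)),
          ((↑(W*g) : R n) m κ).natAbs) < N := by
        rw [← hsum]
        apply Finset.sum_lt_sum
        · intro m hm
          rcases eq_or_ne m b with rfl | hmb
          · rw [hnewb]; omega
          · rw [hother m hmb]
        · refine ⟨b, by simp [hbk], ?_⟩
          rw [hnewb]; omega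
      obtain ⟨h', hh'mem, hh'Idc, hh'Odd, hh'done⟩ :=
        ih _ hmsum (W*g) rfl hIdc' hOdd' p hp hodd'
      refine ⟨h' * W, mul_mem hh'mem hWmem, ?_, ?_, ?_⟩
      · rw [mul_assoc]; exact hh'Idc
      · rw [mul_assoc]; exact hh'Odd
      · rw [mul_assoc]; exact hh'done
  · -- terminal: all other low entries vanish
    push_neg at hb
    have hz : ∀ m : Fin n, k ≤ (m:ℕ) → m ≠ p → (↑g : R n) m κ = 0 := by
      intro m hm hmp; exact hb m hm hmp
    rcases low_unit hk hIdc p hp hz with h1 | hm1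
    · exact phaseB_term hn k hk g hIdc hOdd p hp hz h1
    · -- negate row p first
      set W : GLn n := Du p with hW
      have hWmem : W ∈ Hgp n hn := Du_mem hn p
      have hWg : ∀ i j, (↑(W*g) : R n) i j
          = if i = p then -(↑g : R n) i j else (↑g : R n) i j := by
        intro i j
        rw [Units.val_mul, hW, Du_val, Dm_mul_apply]
      have hIdc' : Idc (W*g) k := by
        intro i j hj
        rw [hWg i j]
        rcases eq_or_ne i p with rfl | hip
        · rw [if_pos rfl, hIdc i j hj, if_neg (fun h : i = j => by rw [h] at hp; omega),
            neg_zero]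
        · rw [if_neg hip, hIdc i j hj]
      have hOdd' : OddCols (W*g) := OddCols.mul (Hgp_le_odd hn W hWmem) hOdd
      have hz' : ∀ m : Fin n, k ≤ (m:ℕ) → m ≠ p → (↑(W*g) : R n) m κ = 0 := by
        intro m hm hmp
        rw [hWg m κ, if_neg hmp]
        exact hz m hm hmp
      have h1' : (↑(W*g) : R n) p κ = 1 := by
        rw [hWg p κ, if_pos rfl, hm1]; ring
      obtain ⟨h', hh'mem, hh'Idc, hh'Odd, hh'done⟩ :=
        phaseB_term hn k hk (W*g) hIdc' hOdd' p hp hz' h1'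
      refine ⟨h' * W, mul_mem hh'mem hWmem, ?_, ?_, ?_⟩
      · rw [mul_assoc]; exact hh'Idc
      · rw [mul_assoc]; exact hh'Odd
      · rw [mul_assoc]; exact hh'done


lemma phaseC1 (k : ℕ) (hk : k < n) :
    ∀ N : ℕ, ∀ g : GLn n,
      (Finset.univ.filter
        (fun i : Fin n => (i:ℕ) < k ∧ Odd ((↑g : R n) i ⟨k,hk⟩))).card = N →
      Idc g k → OddCols g →
      (∀ m : Fin n, k ≤ (m:ℕ) → (↑g : R n) m ⟨k,hk⟩ = if m = ⟨k,hk⟩ then 1 else 0) →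
      ∃ h ∈ Hgp n hn, Idc (h*g) k ∧ OddCols (h*g) ∧
        (∀ m : Fin n, k ≤ (m:ℕ) → (↑(h*g) : R n) m ⟨k,hk⟩ = if m = ⟨k,hk⟩ then 1 else 0) ∧
        (∀ i : Fin n, (i:ℕ) < k → Even ((↑(h*g) : R n) i ⟨k,hk⟩)) := by
  intro N
  induction N using Nat.strong_induction_on with
  | _ N ih =>
  intro g hcard hIdc hOdd hlow
  set κ : Fin n := ⟨k, hk⟩ with hκ
  set U := Finset.univ.filter
    (fun i : Fin n => (i:ℕ) < k ∧ Odd ((↑g : R n) i κ)) with hU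
  have memU : ∀ m : Fin n, m ∈ U ↔ ((m:ℕ) < k ∧ Odd ((↑g : R n) m κ)) := by
    intro m; simp [hU]
  rcases Nat.eq_zero_or_pos N with hN0 | hNpos
  · subst hN0
    refine ⟨1, one_mem _, by rwa [one_mul], by rwa [one_mul], by rwa [one_mul], ?_⟩
    intro i hi
    rw [one_mul, ← Int.not_odd_iff_even]
    intro hodd
    have : i ∈ U := (memU i).2 ⟨hi, hodd⟩
    rw [Finset.card_eq_zero.1 hcard] at this
    exact absurd this (Finset.notMem_empty i)
  · -- N is even, hence ≥ 2
    set F := Finset.univ.filter (fun i : Fin n => Odd ((↑g : R n) i κ)) with hF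
    have hFodd : Odd F.card := by rw [← odd_sum_iff]; exact hOdd κ
    have hUF : U = F.filter (fun m : Fin n => (m:ℕ) < k) := by
      ext m; simp [hU, hF]; tauto
    have hFk : F.filter (fun m : Fin n => ¬ (m:ℕ) < k) = {κ} := by
      ext m
      simp only [Finset.mem_filter, Finset.mem_univ, true_and, Finset.mem_singleton,
        hF, not_lt]
      constructor
      · rintro ⟨hodd, hm⟩
        by_contra hmκ
        rw [hlow m hm, if_neg hmκ] at hodd
        exact (by decide : ¬ Odd (0:ℤ)) hodd
      · rintro rfl
        refine ⟨?_, le_refl k⟩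
        rw [hlow κ (le_refl k), if_pos rfl]
        decide
    have hsplit := Finset.card_filter_add_card_filter_not
      (s := F) (p := fun m : Fin n => (m:ℕ) < k)
    rw [← hUF, hcard, hFk, Finset.card_singleton] at hsplit
    have hN2 : 1 < N := by
      rcases hFodd with ⟨t, ht⟩; omega
    obtain ⟨a, haU, b, hbU, hab⟩ := Finset.one_lt_card.1 (by omega : 1 < U.card)
    have hak : (a:ℕ) < k := ((memU a).1 haU).1
    have hbk : (b:ℕ) < k := ((memU b).1 hbU).1
    have haODD : Odd ((↑g : R n) a κ) := ((memU a).1 haU).2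
    have hbODD : Odd ((↑g : R n) b κ) := ((memU b).1 hbU).2
    have hκval : (κ:ℕ) = k := rfl
    have haκ : a ≠ κ := fun h => by rw [h, hκval] at hak; omega
    have hbκ : b ≠ κ := fun h => by rw [h, hκval] at hbk; omega
    have hgκκ : (↑g : R n) κ κ = 1 := by rw [hlow κ (le_refl k), if_pos rfl]
    set W : GLn n := Tu a κ haκ 1 * Tu b κ hbκ 1 with hW
    have hWmem : W ∈ Hgp n hn := Bu_mem hn a b κ hab haκ hbκ
    have hWg : ∀ i j, (↑(W*g) : R n) i j = (↑g : R n) i j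
        + ((if i = a then (↑g : R n) κ j else 0) + (if i = b then (↑g : R n) κ j else 0)) := by
      intro i j
      rw [Units.val_mul, hW, Units.val_mul, Tu_val, Tu_val, TT_mul_apply a b κ hbκ]
    have hIdc' : Idc (W*g) k := by
      intro i j hj
      rw [hWg i j, hIdc i j hj, hIdc κ j hj, if_neg (fun h : κ = j => by
        rw [← h, hκval] at hj; omega)]
      simp
    have hOdd' : OddCols (W*g) := OddCols.mul (Hgp_le_odd hn W hWmem) hOdd
    have hlow' : ∀ m : Fin n, k ≤ (m:ℕ) →
        (↑(W*g) : R n) m κ = if m = κ then 1 else 0 := by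
      intro m hm
      rw [hWg m κ, if_neg (fun h : m = a => by rw [h] at hm; omega),
        if_neg (fun h : m = b => by rw [h] at hm; omega), add_zero, add_zero]
      exact hlow m hm
    have hU' : Finset.univ.filter
        (fun i : Fin n => (i:ℕ) < k ∧ Odd ((↑(W*g) : R n) i κ)) = (U.erase a).erase b := by
      ext m
      simp only [Finset.mem_filter, Finset.mem_univ, true_and, Finset.mem_erase]
      rw [hWg m κ]
      rcases eq_or_ne m a with rfl | hma
      · rw [if_pos rfl, if_neg hab, add_zero, hgκκ]
        constructor
        · rintro ⟨_, hodd⟩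
          exact absurd hodd (odd_add_odd' haODD (by decide))
        · rintro ⟨_, h, _⟩; exact absurd rfl h
      · rw [if_neg hma]
        rcases eq_or_ne m b with rfl | hmb
        · rw [if_pos rfl, zero_add, hgκκ]
          constructor
          · rintro ⟨_, hodd⟩
            exact absurd hodd (odd_add_odd' hbODD (by decide))
          · rintro ⟨h, _⟩; exact absurd rfl h
        · rw [if_neg hmb, add_zero, add_zero, memU m]
          tauto
    have hcard' : ((U.erase a).erase b).card = N - 2 := by
      have hbmem : b ∈ U.erase a := Finset.mem_erase.2 ⟨Ne.symm hab, hbU⟩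
      rw [Finset.card_erase_of_mem hbmem, Finset.card_erase_of_mem haU, hcard]
      omega
    obtain ⟨h', hh'mem, hh'Idc, hh'Odd, hh'low, hh'even⟩ :=
      ih (N-2) (by omega) (W*g) (by rw [hU', hcard']) hIdc' hOdd' hlow'
    refine ⟨h' * W, mul_mem hh'mem hWmem, ?_, ?_, ?_, ?_⟩
    · rw [mul_assoc]; exact hh'Idc
    · rw [mul_assoc]; exact hh'Odd
    · rw [mul_assoc]; exact hh'low
    · rw [mul_assoc]; exact hh'even

lemma phaseC2 (k : ℕ) (hk : k < n) :
    ∀ N : ℕ, ∀ g : GLn n,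
      (∑ i ∈ Finset.univ.filter (fun i : Fin n => (i:ℕ) < k),
        ((↑g : R n) i ⟨k,hk⟩).natAbs) = N →
      Idc g k → OddCols g →
      (∀ m : Fin n, k ≤ (m:ℕ) → (↑g : R n) m ⟨k,hk⟩ = if m = ⟨k,hk⟩ then 1 else 0) →
      (∀ i : Fin n, (i:ℕ) < k → Even ((↑g : R n) i ⟨k,hk⟩)) →
      ∃ h ∈ Hgp n hn, Idc (h*g) (k+1) ∧ OddCols (h*g) := by
  intro N
  induction N using Nat.strong_induction_on with
  | _ N ih =>
  intro g hsum hIdc hOdd hlow heven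
  set κ : Fin n := ⟨k, hk⟩ with hκ
  have hκval : (κ:ℕ) = k := rfl
  by_cases hz : ∀ i : Fin n, (i:ℕ) < k → (↑g : R n) i κ = 0
  · refine ⟨1, one_mem _, ?_, by rwa [one_mul]⟩
    rw [one_mul]
    intro i j hj
    rcases lt_or_eq_of_le (Nat.lt_succ_iff.1 hj) with hj' | hj'
    · exact hIdc i j hj'
    · have hjκ : j = κ := Fin.ext (show (j:ℕ) = (κ:ℕ) from hj')
      subst hjκ
      rcases lt_or_ge (i:ℕ) k with hi | hi
      · rw [hz i hi, if_neg (fun h : i = κ => by rw [h, hκval] at hi; omega)]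
      · exact hlow i hi
  · push_neg at hz
    obtain ⟨a, hak, hane⟩ := hz
    obtain ⟨t, ht⟩ := heven a hak
    have hκval : (κ:ℕ) = k := rfl
    have haκ : a ≠ κ := fun h => by rw [h, hκval] at hak; omega
    have hgκκ : (↑g : R n) κ κ = 1 := by rw [hlow κ (le_refl k), if_pos rfl]
    set W : GLn n := Tu a κ haκ (2*(-t)) with hW
    have hWmem : W ∈ Hgp n hn := Tu2_mem hn a κ haκ (-t)
    have hWg : ∀ i j, (↑(W*g) : R n) i j
        = (↑g : R n) i j + (if i = a then 2*(-t) * (↑g : R n) κ j else 0) := by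
      intro i j
      rw [Units.val_mul, hW, Tu_val, Tm_mul_apply]
    have hIdc' : Idc (W*g) k := by
      intro i j hj
      rw [hWg i j, hIdc i j hj, hIdc κ j hj, if_neg (fun h : κ = j => by
        rw [← h, hκval] at hj; omega)]
      simp
    have hOdd' : OddCols (W*g) := OddCols.mul (Hgp_le_odd hn W hWmem) hOdd
    have hlow' : ∀ m : Fin n, k ≤ (m:ℕ) →
        (↑(W*g) : R n) m κ = if m = κ then 1 else 0 := by
      intro m hm
      rw [hWg m κ, if_neg (fun h : m = a => by rw [h] at hm; omega), add_zero]
      exact hlow m hm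
    have hnewa : (↑(W*g) : R n) a κ = 0 := by
      rw [hWg a κ, if_pos rfl, hgκκ, ht]; ring
    have hother : ∀ m : Fin n, m ≠ a → (↑(W*g) : R n) m κ = (↑g : R n) m κ := by
      intro m hma; rw [hWg m κ, if_neg hma, add_zero]
    have heven' : ∀ i : Fin n, (i:ℕ) < k → Even ((↑(W*g) : R n) i κ) := by
      intro i hi
      rcases eq_or_ne i a with rfl | hia
      · rw [hnewa]; exact ⟨0, by ring⟩
      · rw [hother i hia]; exact heven i hi
    have hmsum : (∑ i ∈ Finset.univ.filter (fun i : Fin n => (i:ℕ) < k),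
        ((↑(W*g) : R n) i κ).natAbs) < N := by
      rw [← hsum]
      apply Finset.sum_lt_sum
      · intro m hm
        rcases eq_or_ne m a with rfl | hma
        · rw [hnewa]; omega
        · rw [hother m hma]
      · refine ⟨a, by simp [hak], ?_⟩
        rw [hnewa]; omega
    obtain ⟨h', hh'mem, hh'Idc, hh'Odd⟩ :=
      ih _ hmsum (W*g) rfl hIdc' hOdd' hlow' heven'
    refine ⟨h' * W, mul_mem hh'mem hWmem, ?_, ?_⟩
    · rw [mul_assoc]; exact hh'Idc
    · rw [mul_assoc]; exact hh'Odd

lemma main_step (k : ℕ) (hk : k < n) (g : GLn n) (hIdc : Idc g k) (hOdd : OddCols g) :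
    ∃ h ∈ Hgp n hn, Idc (h*g) (k+1) ∧ OddCols (h*g) := by
  obtain ⟨h1, h1mem, h1Idc, h1Odd, p, hpk, hp⟩ := phaseA hn k hk _ g rfl hIdc hOdd
  obtain ⟨h2, h2mem, h2Idc, h2Odd, h2low⟩ := phaseB hn k hk _ (h1*g) rfl h1Idc h1Odd p hpk hp
  obtain ⟨h3, h3mem, h3Idc, h3Odd, h3low, h3even⟩ :=
    phaseC1 hn k hk _ (h2*(h1*g)) rfl h2Idc h2Odd h2low
  obtain ⟨h4, h4mem, h4Idc, h4Odd⟩ :=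
    phaseC2 hn k hk _ (h3*(h2*(h1*g))) rfl h3Idc h3Odd h3low h3even
  refine ⟨h4 * h3 * h2 * h1, mul_mem (mul_mem (mul_mem h4mem h3mem) h2mem) h1mem, ?_, ?_⟩
  · rw [show h4 * h3 * h2 * h1 * g = h4*(h3*(h2*(h1*g))) by group]
    exact h4Idc
  · rw [show h4 * h3 * h2 * h1 * g = h4*(h3*(h2*(h1*g))) by group]
    exact h4Odd

lemma idc_n_eq_one (g : GLn n) (hIdc : Idc g n) : g = 1 := by
  apply Units.ext
  ext i j
  rw [hIdc i j j.2, Units.val_one, one_apply]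

lemma main (hn : 3 ≤ n) : ∀ d k : ℕ, ∀ g : GLn n, n ≤ k + d → Idc g k → OddCols g →
    g ∈ Hgp n hn := by
  intro d
  induction d with
  | zero =>
      intro k g hkd hIdc _
      have : Idc g n := fun i j hj => hIdc i j (by omega)
      rw [idc_n_eq_one g this]
      exact one_mem _
  | succ d ihd =>
      intro k g hkd hIdc hOdd
      rcases lt_or_ge k n with hk | hk
      · obtain ⟨h, hmem, hIdc', hOdd'⟩ := main_step hn k hk g hIdc hOdd
        have hmem' : h * g ∈ Hgp n hn := ihd (k+1) (h*g) (by omega) hIdc' hOdd'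
        have := mul_mem (inv_mem hmem) hmem'
        rwa [inv_mul_cancel_left] at this
      · have : Idc g n := fun i j hj => hIdc i j (by omega)
        rw [idc_n_eq_one g this]
        exact one_mem _

end phases
end GLodd

/-- For `n ≥ 3`, the group `GL(n,ℤ)_odd` (matrices of `GL(n,ℤ)` each of whose columns has an
odd sum of entries) is generated by the permutation matrices together with
`M_θ = diag(−1,1,…,1)`, `M_μ = I + 2E_{21}` and `M_ν = I + E_{21} + E_{31}`. -/
theorem GLodd_generators (n : ℕ) (hn : 3 ≤ n) :
    ((Subgroup.closure
        {g : Matrix.GeneralLinearGroup (Fin n) ℤ |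
          (∃ σ : Equiv.Perm (Fin n),
            (g : Matrix (Fin n) (Fin n) ℤ) =
              Matrix.of fun i j => if i = σ j then 1 else 0) ∨
          (g : Matrix (Fin n) (Fin n) ℤ) =
            Matrix.diagonal (fun i => if i = (⟨0, by omega⟩ : Fin n) then -1 else 1) ∨
          (g : Matrix (Fin n) (Fin n) ℤ) =
            1 + Matrix.single (⟨1, by omega⟩ : Fin n) (⟨0, by omega⟩ : Fin n) 2 ∨
          (g : Matrix (Fin n) (Fin n) ℤ) =
            1 + Matrix.single (⟨1, by omega⟩ : Fin n) (⟨0, by omega⟩ : Fin n) 1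
              + Matrix.single (⟨2, by omega⟩ : Fin n) (⟨0, by omega⟩ : Fin n) 1}
        : Subgroup (Matrix.GeneralLinearGroup (Fin n) ℤ)) :
      Set (Matrix.GeneralLinearGroup (Fin n) ℤ)) =
    {g : Matrix.GeneralLinearGroup (Fin n) ℤ |
      ∀ j : Fin n, Odd (∑ i : Fin n, (g : Matrix (Fin n) (Fin n) ℤ) i j)} := by
  ext g
  constructor
  · intro hg
    exact GLodd.Hgp_le_odd hn g hg
  · intro hg
    have : g ∈ GLodd.Hgp n hn :=
      GLodd.main hn n 0 g (by omega) (fun i j hj => absurd hj (by omega)) hg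
    exact this
end
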